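/- Let (R, m) be a Noetherian local ring, M an R-module, and suppose (I_t) is a descending chain of m-primary ideals such that each R/I_t is Gorenstein Artinian with socle generated by the image of u_t ∈ R, such that E_R(k) = colim_t R/I_t. Then the set N = {x ∈ M : the map R → M, 1 ↦ x, is not pure} equals the union over t of the submodules (I_t M :_M u_t). -/

import Mathlib

universe u v

/-- A map of `R`-modules `N → M` is *pure* if after tensoring with any `R`-module `K`,
the induced map `N ⊗ K → M ⊗ K` is injective. -/
def IsPureMap {R : Type u} [CommRing R] {N M : Type v} [AddCommGroup N] [Module R N]
    [AddCommGroup M] [Module R M] (f : N →ₗ[R] M) : Prop :=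
  ∀ (K : Type v) [AddCommGroup K] [Module R K], Function.Injective (LinearMap.rTensor K f)

open TensorProduct

lemma tmul_mk_eq_zero_iff {R : Type u} [CommRing R] {M : Type v} [AddCommGroup M] [Module R M]
    (I : Ideal R) (x : M) (r : R) :
    x ⊗ₜ[R] (Ideal.Quotient.mk I r) = (0 : M ⊗[R] (R ⧸ I)) ↔ r • x ∈ I • (⊤ : Submodule R M) := by
  rw [← (TensorProduct.tensorQuotEquivQuotSMul M I).map_eq_zero_iff,
    TensorProduct.tensorQuotEquivQuotSMul_tmul_mk, Submodule.Quotient.mk_eq_zero]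

open IsLocalRing in
lemma socle_mem_of_not_mem {R : Type u} [CommRing R] [IsLocalRing R] (I : Ideal R) (uu r : R)
    (hprim : ∃ k : ℕ, maximalIdeal R ^ k ≤ I)
    (hcolon : I.colon (maximalIdeal R) = I ⊔ Ideal.span {uu})
    (hr : r ∉ I) : uu ∈ I ⊔ Ideal.span {r} := by
  classical
  obtain ⟨k, hk⟩ := hprim
  have hex : ∃ n : ℕ, Ideal.span {r} * maximalIdeal R ^ n ≤ I :=
    ⟨k, le_trans Ideal.mul_le_right hk⟩
  set n₀ := Nat.find hex with hn₀
  have hspec := Nat.find_spec hex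
  rw [← hn₀] at hspec
  have h₀ : n₀ ≠ 0 := by
    intro h
    rw [h, pow_zero, mul_one] at hspec
    exact hr (hspec (Ideal.mem_span_singleton_self r))
  have hlt : ¬ (Ideal.span {r} * maximalIdeal R ^ (n₀ - 1) ≤ I) :=
    Nat.find_min hex (Nat.sub_lt (Nat.pos_of_ne_zero h₀) one_pos)
  obtain ⟨y, hy, hyI⟩ := SetLike.not_le_iff_exists.mp hlt
  have hyc : y ∈ I.colon (maximalIdeal R) := by
    rw [Submodule.mem_colon]
    intro p hp
    have h1 : y • p ∈ (Ideal.span {r} * maximalIdeal R ^ (n₀ - 1)) * maximalIdeal R :=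
      Ideal.mul_mem_mul hy hp
    have hps : n₀ - 1 + 1 = n₀ := by omega
    rw [mul_assoc, ← pow_succ, hps] at h1
    exact hspec h1
  rw [hcolon] at hyc
  obtain ⟨i, hi, z, hz, hyiz⟩ := Submodule.mem_sup.mp hyc
  obtain ⟨s, rfl⟩ := Ideal.mem_span_singleton'.mp hz
  have hu_colon : uu ∈ I.colon (maximalIdeal R) := by
    rw [hcolon]; exact Submodule.mem_sup_right (Ideal.mem_span_singleton_self uu)
  have hs : s ∉ maximalIdeal R := by
    intro hs
    apply hyI
    have h2 : s * uu ∈ I := by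
      have := Submodule.mem_colon.mp hu_colon s hs
      rwa [smul_eq_mul, mul_comm] at this
    rw [← hyiz]
    exact Ideal.add_mem I hi h2
  have hsunit : IsUnit s := IsLocalRing.notMem_maximalIdeal.mp hs
  obtain ⟨w, hw⟩ := hsunit.exists_left_inv
  have key : uu = w * y - w * i := by
    have h3 : w * (i + s * uu) - w * i = (w * s) * uu := by ring
    rw [← hyiz, h3, hw, one_mul]
  rw [key]
  have hyr : y ∈ Ideal.span {r} := Ideal.mul_le_left hy
  exact sub_mem (Submodule.mem_sup_right (Ideal.mul_mem_left _ w hyr))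
    (Submodule.mem_sup_left (Ideal.mul_mem_left _ w hi))


section DLV

variable {R : Type u} [CommRing R] {M E : Type v} [AddCommGroup M] [Module R M]
  [AddCommGroup E] [Module R E] (F : ℕ → Submodule R E) (hmono : Monotone F)

/-- The directed system of `M ⊗ F t`. -/
noncomputable abbrev GG (t : ℕ) : Type v := M ⊗[R] (F t)

noncomputable instance (t : ℕ) : AddCommGroup (GG (M := M) F t) :=
  inferInstanceAs (AddCommGroup (M ⊗[R] (F t)))

noncomputable instance (t : ℕ) : Module R (GG (M := M) F t) :=
  inferInstanceAs (Module R (M ⊗[R] (F t)))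

noncomputable def gg : ∀ (s t : ℕ), s ≤ t → GG (M := M) F s →ₗ[R] GG (M := M) F t :=
  fun s t h => LinearMap.lTensor M (Submodule.inclusion (hmono h))

lemma exists_tmul_eq_zero_stage (hcover : ∀ e : E, ∃ t, e ∈ F t) (x : M) (t : ℕ) (e : E)
    (he : e ∈ F t) (h : x ⊗ₜ[R] e = (0 : M ⊗[R] E)) :
    ∃ t', ∃ h' : t ≤ t',
      x ⊗ₜ[R] (⟨e, hmono h' he⟩ : F t') = (0 : M ⊗[R] (F t')) := by
  classical
  haveI : DirectedSystem (GG (M := M) F) (fun s t h => gg F hmono s t h) := by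
    constructor
    · intro i z
      have h1 : (Submodule.inclusion (hmono (le_refl i)) : F i →ₗ[R] F i) = LinearMap.id := by
        ext p; rfl
      show LinearMap.lTensor M _ z = z
      rw [h1, LinearMap.lTensor_id]; rfl
    · intro k j i hij hjk z
      show LinearMap.lTensor M _ (LinearMap.lTensor M _ z) = LinearMap.lTensor M _ z
      rw [← LinearMap.lTensor_comp_apply]
      congr 1
  -- the key independence lemma
  have key : ∀ (m : M) (e' : E) (t₁ t₂ : ℕ) (h₁ : e' ∈ F t₁) (h₂ : e' ∈ F t₂),
      Module.DirectLimit.of R ℕ (GG (M := M) F) (gg F hmono) t₁ (m ⊗ₜ ⟨e', h₁⟩) =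
      Module.DirectLimit.of R ℕ (GG (M := M) F) (gg F hmono) t₂ (m ⊗ₜ ⟨e', h₂⟩) := by
    intro m e' t₁ t₂ h₁ h₂
    have e₁ : t₁ ≤ max t₁ t₂ := le_max_left _ _
    have e₂ : t₂ ≤ max t₁ t₂ := le_max_right _ _
    rw [← Module.DirectLimit.of_f (hij := e₁), ← Module.DirectLimit.of_f (hij := e₂)]
    congr 1
  -- the bilinear map
  let b : M →ₗ[R] E →ₗ[R] Module.DirectLimit (GG (M := M) F) (gg F hmono) :=
    LinearMap.mk₂ R
      (fun m e' => Module.DirectLimit.of R ℕ (GG (M := M) F) (gg F hmono)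
        (hcover e').choose (m ⊗ₜ ⟨e', (hcover e').choose_spec⟩))
      (by
        intro m₁ m₂ e'
        beta_reduce
        rw [← map_add, ← TensorProduct.add_tmul])
      (by
        intro c m e'
        beta_reduce
        rw [← map_smul, TensorProduct.smul_tmul'])
      (by
        intro m e₁ e₂
        beta_reduce
        set t₁ := (hcover e₁).choose
        set t₂ := (hcover e₂).choose
        set t₃ := (hcover (e₁ + e₂)).choose
        set T := max (max t₁ t₂) t₃
        have m₁ : e₁ ∈ F T := hmono (le_trans (le_max_left t₁ t₂) (le_max_left _ _))
          (hcover e₁).choose_spec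
        have m₂ : e₂ ∈ F T := hmono (le_trans (le_max_right t₁ t₂) (le_max_left _ _))
          (hcover e₂).choose_spec
        have m₃ : e₁ + e₂ ∈ F T := hmono (le_max_right _ _) (hcover (e₁ + e₂)).choose_spec
        rw [key m (e₁ + e₂) t₃ T (hcover (e₁ + e₂)).choose_spec m₃,
          key m e₁ t₁ T (hcover e₁).choose_spec m₁,
          key m e₂ t₂ T (hcover e₂).choose_spec m₂, ← map_add]
        congr 1
        rw [← TensorProduct.tmul_add]
        congr 1)
      (by
        intro c m e'
        beta_reduce
        set t₁ := (hcover (c • e')).choose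
        set t₂ := (hcover e').choose
        set T := max t₁ t₂
        have m₁ : c • e' ∈ F T := hmono (le_max_left _ _) (hcover (c • e')).choose_spec
        have m₂ : e' ∈ F T := hmono (le_max_right _ _) (hcover e').choose_spec
        rw [key m (c • e') t₁ T (hcover (c • e')).choose_spec m₁,
          key m e' t₂ T (hcover e').choose_spec m₂, ← map_smul]
        congr 1
        rw [← TensorProduct.tmul_smul]
        congr 1)
  let χ : M ⊗[R] E →ₗ[R] Module.DirectLimit (GG (M := M) F) (gg F hmono) :=
    TensorProduct.lift b
  have hχ : χ (x ⊗ₜ e) = Module.DirectLimit.of R ℕ (GG (M := M) F) (gg F hmono) t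
      (x ⊗ₜ ⟨e, he⟩) := by
    show Module.DirectLimit.of R ℕ (GG (M := M) F) (gg F hmono)
        (hcover e).choose (x ⊗ₜ ⟨e, (hcover e).choose_spec⟩) = _
    exact key x e _ t (hcover e).choose_spec he
  rw [h, map_zero] at hχ
  obtain ⟨j, hij, hj⟩ := Module.DirectLimit.of.zero_exact hχ.symm
  refine ⟨j, hij, ?_⟩
  have : gg F hmono t j hij (x ⊗ₜ ⟨e, he⟩) = x ⊗ₜ (⟨e, hmono hij he⟩ : F j) := by
    show LinearMap.lTensor M _ _ = _
    rw [LinearMap.lTensor_tmul]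
    rfl
  rw [← this]
  exact hj

end DLV

/-- Let `(R, m)` be a Noetherian local ring, `M` an `R`-module, and `(I_t)` a descending
chain of `m`-primary ideals, cofinal with the powers of `m`, such that each `R/I_t` is
Gorenstein Artinian with socle generated by the image of `u_t ∈ R`, and such that the
injective hull `E = E_R(k)` of the residue field is the colimit (union) of the submodules
`Ann_E(I_t) ≅ R/I_t`.  Then the set `N = {x ∈ M : R → M, 1 ↦ x, is not pure}` equals
the union over `t` of the submodules `(I_t M :_M u_t)`. -/
theorem nonpure_locus_eq_iUnion_colon {R : Type u} [CommRing R] [IsNoetherianRing R]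
    [IsLocalRing R] (I : ℕ → Ideal R) (u : ℕ → R) (hI : Antitone I)
    (hprimary : ∀ t, ∃ k : ℕ, IsLocalRing.maximalIdeal R ^ k ≤ I t)
    (hcofinal : ∀ n : ℕ, ∃ t, I t ≤ IsLocalRing.maximalIdeal R ^ n)
    (hGor : ∀ t, u t ∉ I t ∧
      (I t).colon (IsLocalRing.maximalIdeal R) = I t ⊔ Ideal.span {u t})
    -- the injective hull `E` of the residue field, realized as the colimit of the `R/I_t`
    (E : Type u) [AddCommGroup E] [Module R E] [Module.Injective R E]
    (κ : IsLocalRing.ResidueField R →ₗ[R] E) (hκinj : Function.Injective κ)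
    (hess : ∀ P : Submodule R E, P ≠ ⊥ → P ⊓ LinearMap.range κ ≠ ⊥)
    (ι : ∀ t, (R ⧸ I t) →ₗ[R] E) (hιinj : ∀ t, Function.Injective (ι t))
    (hann : ∀ t, (LinearMap.range (ι t) : Set E) = {e : E | ∀ a ∈ I t, a • e = 0})
    (hcolim : ∀ e : E, ∃ t, e ∈ LinearMap.range (ι t))
    (M : Type u) [AddCommGroup M] [Module R M] :
    {x : M | ¬ IsPureMap (LinearMap.toSpanSingleton R M x)} =
      ⋃ t, {x : M | u t • x ∈ I t • (⊤ : Submodule R M)} := by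
  ext x
  simp only [Set.mem_setOf_eq, Set.mem_iUnion]
  constructor
  · intro hx
    by_contra hcon
    push_neg at hcon
    apply hx
    intro K _ _
    rw [injective_iff_map_eq_zero]
    intro z hz
    set k : K := TensorProduct.lid R K z with hk
    have hzk : z = (1 : R) ⊗ₜ[R] k := by
      rw [hk, ← TensorProduct.lid_symm_apply, LinearEquiv.symm_apply_apply]
    by_cases hk0 : k = 0
    · rw [hzk, hk0, TensorProduct.tmul_zero]
    exfalso
    have hxk : x ⊗ₜ[R] k = (0 : M ⊗[R] K) := by
      rw [hzk] at hz
      rwa [LinearMap.rTensor_tmul, LinearMap.toSpanSingleton_apply, one_smul] at hz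
    -- build `ψ : K →ₗ[R] E` nonzero at `k`
    set f₁ := LinearMap.toSpanSingleton R K k with hf₁
    have hker : LinearMap.ker f₁ ≠ ⊤ := by
      intro hT
      apply hk0
      have h1 : (1 : R) ∈ LinearMap.ker f₁ := hT ▸ Submodule.mem_top
      rw [LinearMap.mem_ker, hf₁, LinearMap.toSpanSingleton_apply, one_smul] at h1
      exact h1
    have hkerle := IsLocalRing.le_maximalIdeal hker
    set g₀ : R →ₗ[R] E := κ ∘ₗ (IsLocalRing.maximalIdeal R).mkQ with hg₀def
    have hg₀ : LinearMap.ker f₁ ≤ LinearMap.ker g₀ := by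
      intro a ha
      have h2 : a ∈ IsLocalRing.maximalIdeal R := hkerle ha
      have h3 : (IsLocalRing.maximalIdeal R).mkQ a = 0 := (Submodule.Quotient.mk_eq_zero _).2 h2
      exact LinearMap.mem_ker.mpr ((congrArg κ h3).trans (map_zero κ))
    set g : (R ⧸ LinearMap.ker f₁) →ₗ[R] E := Submodule.liftQ _ g₀ hg₀ with hgdef
    have hkmem : k ∈ LinearMap.range f₁ :=
      ⟨1, by rw [hf₁, LinearMap.toSpanSingleton_apply, one_smul]⟩
    set eqv := f₁.quotKerEquivRange with heqvdef
    set h₀ : (LinearMap.range f₁) →ₗ[R] E := g ∘ₗ (eqv.symm : _ →ₗ[R] _) with hh₀def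
    obtain ⟨ψ, hψ⟩ := Module.Injective.out (Submodule.subtype (LinearMap.range f₁))
      (Submodule.injective_subtype _) h₀
    set e : E := ψ k with hedef
    have hek : e = h₀ ⟨k, hkmem⟩ := hψ ⟨k, hkmem⟩
    have heqv : eqv (Submodule.Quotient.mk 1) = ⟨k, hkmem⟩ := by
      apply Subtype.ext
      show ((f₁.quotKerEquivRange) (Submodule.Quotient.mk 1) : K) = k
      rw [LinearMap.quotKerEquivRange_apply_mk]
      exact one_smul R k
    have he : e = κ (Submodule.Quotient.mk (1 : R)) := by
      rw [hek, hh₀def, LinearMap.comp_apply, LinearEquiv.coe_coe, ← heqv,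
        LinearEquiv.symm_apply_apply]
      rfl
    have he0 : e ≠ 0 := by
      rw [he]
      intro h0
      have h1 : (Submodule.Quotient.mk (1 : R) : R ⧸ IsLocalRing.maximalIdeal R) = 0 :=
        hκinj (h0.trans (map_zero κ).symm)
      rw [Submodule.Quotient.mk_eq_zero] at h1
      exact (Ideal.ne_top_iff_one _).1 (IsLocalRing.maximalIdeal.isMaximal R).ne_top h1
    have hxe : x ⊗ₜ[R] e = (0 : M ⊗[R] E) := by
      have h4 := congrArg (LinearMap.lTensor M ψ) hxk
      rwa [LinearMap.lTensor_tmul, map_zero] at h4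
    -- pass to a stage of the filtration
    set F : ℕ → Submodule R E := fun t => LinearMap.range (ι t) with hFdef
    have hmono : Monotone F := by
      intro s t hst y hy
      have h1 : y ∈ (LinearMap.range (ι s) : Set E) := hy
      rw [hann s] at h1
      show y ∈ (LinearMap.range (ι t) : Set E)
      rw [hann t]
      exact fun a ha => h1 a (hI hst ha)
    obtain ⟨t₀, het₀⟩ := hcolim e
    obtain ⟨t, htt, hvan⟩ := exists_tmul_eq_zero_stage F hmono (fun e => hcolim e) x t₀ e het₀ hxe
    have hm : e ∈ LinearMap.range (ι t) := hmono htt het₀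
    obtain ⟨rq, hrq⟩ := hm
    obtain ⟨r, hr⟩ := Ideal.Quotient.mk_surjective rq
    set eqt := LinearEquiv.ofInjective (ι t) (hιinj t) with heqtdef
    have h5 : eqt (Ideal.Quotient.mk (I t) r) = ⟨e, hmono htt het₀⟩ := by
      apply Subtype.ext
      rw [heqtdef, LinearEquiv.ofInjective_apply, hr]
      exact hrq
    have h6 : x ⊗ₜ[R] (Ideal.Quotient.mk (I t) r) = (0 : M ⊗[R] (R ⧸ I t)) := by
      have h7 := congrArg (LinearMap.lTensor M eqt.symm.toLinearMap) hvan
      rw [LinearMap.lTensor_tmul, map_zero] at h7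
      rw [LinearEquiv.coe_toLinearMap] at h7
      rwa [← h5, LinearEquiv.symm_apply_apply] at h7
    have h7 : r • x ∈ I t • (⊤ : Submodule R M) := (tmul_mk_eq_zero_iff _ _ _).1 h6
    have hrI : r ∉ I t := by
      intro hrI
      apply he0
      have h8 : Ideal.Quotient.mk (I t) r = 0 := Ideal.Quotient.eq_zero_iff_mem.2 hrI
      rw [← hrq, ← hr, h8, map_zero]
    have h8 : u t ∈ I t ⊔ Ideal.span {r} :=
      socle_mem_of_not_mem (I t) (u t) r (hprimary t) (hGor t).2 hrI
    obtain ⟨i, hi, z', hzz, hiz⟩ := Submodule.mem_sup.mp h8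
    obtain ⟨c, rfl⟩ := Ideal.mem_span_singleton'.mp hzz
    apply hcon t
    have h9 : u t • x = i • x + c • (r • x) := by
      rw [← hiz, add_smul, smul_smul]
    rw [h9]
    exact Submodule.add_mem _ (Submodule.smul_mem_smul hi Submodule.mem_top)
      (Submodule.smul_mem _ c h7)
  · rintro ⟨t, hxt⟩ hpure
    have hinj := hpure (R ⧸ I t)
    have hz : LinearMap.rTensor (R ⧸ I t) (LinearMap.toSpanSingleton R M x)
        ((u t) ⊗ₜ[R] (Ideal.Quotient.mk (I t) 1)) = 0 := by
      rw [LinearMap.rTensor_tmul, LinearMap.toSpanSingleton_apply, tmul_mk_eq_zero_iff, one_smul]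
      exact hxt
    have h0 := (injective_iff_map_eq_zero _).1 hinj _ hz
    have h1 := congrArg (TensorProduct.lid R (R ⧸ I t)) h0
    rw [TensorProduct.lid_tmul, map_zero] at h1
    have h2 : Ideal.Quotient.mk (I t) (u t) = 0 := by
      have h3 : u t • (Ideal.Quotient.mk (I t) (1 : R)) = Ideal.Quotient.mk (I t) (u t • (1 : R)) :=
        (Submodule.Quotient.mk_smul _ _ _).symm
      rw [smul_eq_mul, mul_one] at h3
      rw [← h3, h1]
    exact (hGor t).1 (Ideal.Quotient.eq_zero_iff_mem.1 h2)
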